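/- For every 2×2 complex matrix M: tr([M, B₁]R) + tr(M B₁) = tr(B₁) · tr(MR). -/

import Mathlib

noncomputable section

/-- The rank-one matrix `R = (−1/(b₁d₂ − d₁b₂)) · (b₁, d₁)ᵀ · (−d₂, b₂)`
built from the second columns `(b, d)` of `B₁` and `B₂`
(here `b_k = (B_k)₁₂`, `d_k = (B_k)₂₂`). -/
def Rmat (B₁ B₂ : Matrix (Fin 2) (Fin 2) ℂ) : Matrix (Fin 2) (Fin 2) ℂ :=
  (-(B₁ 0 1 * B₂ 1 1 - B₁ 1 1 * B₂ 0 1)⁻¹) •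
    Matrix.vecMulVec ![B₁ 0 1, B₁ 1 1] ![-(B₂ 1 1), B₂ 0 1]

/-- For every `2×2` complex matrix `M`:
`tr([M, B₁]R) + tr(M B₁) = tr B₁ · tr(MR)`. -/
theorem trace_comm_B1_R (B₁ B₂ : Matrix (Fin 2) (Fin 2) ℂ)
    (h₁ : B₁.det = 0) (h₂ : B₂.det = 0)
    (hden : B₁ 0 1 * B₂ 1 1 - B₁ 1 1 * B₂ 0 1 ≠ 0)
    (M : Matrix (Fin 2) (Fin 2) ℂ) :
    ((M * B₁ - B₁ * M) * Rmat B₁ B₂).trace + (M * B₁).trace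
      = B₁.trace * (M * Rmat B₁ B₂).trace := by
  rw [Matrix.det_fin_two] at h₁
  have hRB : Rmat B₁ B₂ * B₁ = B₁ := by
    ext i j
    fin_cases i <;> fin_cases j <;>
      simp only [Rmat, Matrix.mul_apply, Matrix.smul_apply, Matrix.vecMulVec_apply,
        Fin.sum_univ_two, Matrix.cons_val_zero, Matrix.cons_val_one, Matrix.head_cons,
        smul_eq_mul, Fin.isValue, Fin.mk_zero, Fin.mk_one]
    · field_simp
      linear_combination (B₂ 0 1) * h₁
    · field_simp
      ring
    · field_simp
      linear_combination (B₂ 1 1) * h₁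
    · field_simp
      ring
  have hBR : B₁ * Rmat B₁ B₂ = B₁.trace • Rmat B₁ B₂ := by
    ext i j
    fin_cases i <;> fin_cases j <;>
      simp only [Rmat, Matrix.trace_fin_two, Matrix.mul_apply, Matrix.smul_apply,
        Matrix.vecMulVec_apply, Fin.sum_univ_two, Matrix.cons_val_zero, Matrix.cons_val_one,
        Matrix.head_cons, smul_eq_mul, Fin.isValue, Fin.mk_zero, Fin.mk_one]
    · field_simp
    · field_simp
      ring
    · field_simp
      linear_combination (-(B₂ 1 1)) * h₁
    · field_simp
      linear_combination (B₂ 0 1) * h₁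
  have e1 : (M * B₁ * Rmat B₁ B₂).trace = B₁.trace * (M * Rmat B₁ B₂).trace := by
    rw [mul_assoc, hBR, Matrix.mul_smul, Matrix.trace_smul, smul_eq_mul]
  have e2 : (B₁ * M * Rmat B₁ B₂).trace = (M * B₁).trace := by
    rw [Matrix.trace_mul_cycle, hRB, Matrix.trace_mul_comm]
  rw [Matrix.sub_mul, Matrix.trace_sub, e1, e2]
  ring
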